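/- (Cuntz–Krieger uniqueness theorem) Let F be a field endowed with the discrete topology, let G be an effective ample Hausdorff groupoid, and let σ : G^(2) → F^× be a continuous 2-cocycle. Suppose Q is a ring and π : A_F(G,σ) → Q is a ring homomorphism. Then π is injective if and only if π(1_V) ≠ 0 for every nonempty compact open subset V of G^(0). -/

import Mathlib

/-!
Common definitions: topological groupoids, bisections, étale/ample groupoids,
continuous `Rˣ`-valued 2-cocycles, and twisted Steinberg algebras.

A groupoid is modelled as a type `G` together with a composability predicate
`comp`, a (partial, junk-valued off composable pairs) multiplication `mul`,
and an inversion `inv`.  The range and source maps are `r γ = γ γ⁻¹` and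
`s γ = γ⁻¹ γ`, and the unit space is the set of fixed points of `r`.
-/

namespace TwistedSteinberg

structure GroupoidStruct (G : Type*) where
  comp : G → G → Prop
  mul : G → G → G
  inv : G → G

namespace GroupoidStruct

variable {G : Type*}

/-- The range map `r γ = γ γ⁻¹`. -/
def r (T : GroupoidStruct G) (γ : G) : G := T.mul γ (T.inv γ)

/-- The source map `s γ = γ⁻¹ γ`. -/
def s (T : GroupoidStruct G) (γ : G) : G := T.mul (T.inv γ) γ

/-- The unit space `G⁰`. -/
def unitSpace (T : GroupoidStruct G) : Set G := {x | T.r x = x}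

/-- The axioms making `(comp, mul, inv)` a groupoid. -/
structure IsGroupoid (T : GroupoidStruct G) : Prop where
  comp_iff : ∀ a b, T.comp a b ↔ T.s a = T.r b
  assoc : ∀ a b c, T.comp a b → T.comp b c →
    T.mul (T.mul a b) c = T.mul a (T.mul b c)
  inv_inv : ∀ a, T.inv (T.inv a) = a
  r_mul : ∀ a b, T.comp a b → T.r (T.mul a b) = T.r a
  s_mul : ∀ a b, T.comp a b → T.s (T.mul a b) = T.s b
  r_inv : ∀ a, T.r (T.inv a) = T.s a
  s_inv : ∀ a, T.s (T.inv a) = T.r a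
  r_mul_self : ∀ a, T.mul (T.r a) a = a
  mul_s_self : ∀ a, T.mul a (T.s a) = a
  r_unit : ∀ a, T.r a ∈ T.unitSpace
  s_unit : ∀ a, T.s a ∈ T.unitSpace

/-- A topological groupoid: inversion is continuous and multiplication is
continuous on the set of composable pairs. -/
structure IsTopGroupoid [TopologicalSpace G] (T : GroupoidStruct G)
    extends IsGroupoid T : Prop where
  continuous_inv : Continuous T.inv
  continuousOn_mul : ContinuousOn (fun p : G × G => T.mul p.1 p.2)
    {p : G × G | T.comp p.1 p.2}

/-- `B` is a bisection if it is contained in an open set `U` on which both `r`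
and `s` restrict to homeomorphisms onto open subsets. -/
def IsBisection [TopologicalSpace G] (T : GroupoidStruct G) (B : Set G) : Prop :=
  ∃ U : Set G, B ⊆ U ∧ IsOpen U ∧ Set.InjOn T.r U ∧ Set.InjOn T.s U ∧
    ∀ V : Set G, V ⊆ U → IsOpen V → IsOpen (T.r '' V) ∧ IsOpen (T.s '' V)

/-- A groupoid is étale if its range map is a local homeomorphism. -/
def IsEtale [TopologicalSpace G] (T : GroupoidStruct G) : Prop :=
  IsLocalHomeomorph T.r

/-- A groupoid is ample if it has a basis of compact open bisections. -/
def IsAmple [TopologicalSpace G] (T : GroupoidStruct G) : Prop :=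
  TopologicalSpace.IsTopologicalBasis
    {B : Set G | IsCompact B ∧ IsOpen B ∧ T.IsBisection B}

/-- The product `BD` of two subsets of a groupoid. -/
def setMul (T : GroupoidStruct G) (B D : Set G) : Set G :=
  {x | ∃ a ∈ B, ∃ b ∈ D, T.comp a b ∧ T.mul a b = x}

end GroupoidStruct

open GroupoidStruct

section Cocycle

variable {G R : Type*} [TopologicalSpace G] [CommRing R] [TopologicalSpace R]

/-- A continuous normalised `Rˣ`-valued 2-cocycle on the groupoid `T`. -/
structure IsCocycle (T : GroupoidStruct G) (σ : G → G → Rˣ) : Prop where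
  continuousOn : ContinuousOn (fun p : G × G => ((σ p.1 p.2 : Rˣ) : R))
    {p : G × G | T.comp p.1 p.2}
  cocycle : ∀ a b c, T.comp a b → T.comp b c →
    σ a b * σ (T.mul a b) c = σ a (T.mul b c) * σ b c
  norm_left : ∀ γ : G, σ (T.r γ) γ = 1
  norm_right : ∀ γ : G, σ γ (T.s γ) = 1

/-- The underlying `R`-module of the (twisted) Steinberg algebra: locally
constant compactly supported functions `G → R`. -/
def steinbergCarrier (G R : Type*) [TopologicalSpace G] [Zero R] : Set (G → R) :=
  {f | IsLocallyConstant f ∧ IsCompact (Function.support f)}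

/-- The twisted convolution product
`(f *σ g)(γ) = ∑_{αβ = γ} σ(α,β) f(α) g(β)`. -/
noncomputable def conv (T : GroupoidStruct G) (σ : G → G → Rˣ)
    (f g : G → R) (γ : G) : R :=
  ∑ᶠ (p : G × G) (_ : T.comp p.1 p.2 ∧ T.mul p.1 p.2 = γ),
    ((σ p.1 p.2 : Rˣ) : R) * f p.1 * g p.2

/-- A `T`-inverse involution on `R`: a ring involution restricting to
inversion on the subgroup `Tsub ≤ Rˣ`. -/
def IsTInverseInvolution (Tsub : Subgroup Rˣ) (c : R → R) : Prop :=
  c 1 = 1 ∧ (∀ x y, c (x + y) = c x + c y) ∧ (∀ x y, c (x * y) = c x * c y) ∧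
    (∀ x, c (c x) = x) ∧ ∀ z : Rˣ, z ∈ Tsub → c ((z : Rˣ) : R) = ((z⁻¹ : Rˣ) : R)

/-- The twisted involution `f*(γ) = σ(γ,γ⁻¹)⁻¹ ⬝ c (f (γ⁻¹))`. -/
noncomputable def convStar (T : GroupoidStruct G) (σ : G → G → Rˣ) (c : R → R)
    (f : G → R) (γ : G) : R :=
  (((σ γ (T.inv γ))⁻¹ : Rˣ) : R) * c (f (T.inv γ))

end Cocycle
section Twist

/-!
Discrete twists `G⁰ × T → Σ → G` over a Hausdorff étale groupoid `G`,
where `T = Tsub` is a subgroup of the units `Rˣ` of a discrete commutative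
unital ring `R`.  The inclusion is modelled as a map `i : G → Tsub → Σ`
(only its values `i x z` for `x ∈ G⁰` are relevant).
-/

variable {G S R : Type*} [TopologicalSpace G] [TopologicalSpace S]
  [CommRing R] [TopologicalSpace R]

/-- A discrete twist `(Σ, i, q)` by `Tsub ≤ Rˣ` over `G`. -/
structure IsDiscreteTwist (TG : GroupoidStruct G) (TS : GroupoidStruct S)
    (Tsub : Subgroup Rˣ) (i : G → Tsub → S) (q : S → G) : Prop where
  topS : TS.IsTopGroupoid
  t2S : T2Space S
  locallyCompactS : LocallyCompactSpace S
  unit_eq : TS.unitSpace = (fun x => i x 1) '' TG.unitSpace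
  i_continuousOn : ContinuousOn (fun p : G × Tsub => i p.1 p.2)
    (TG.unitSpace ×ˢ (Set.univ : Set Tsub))
  i_injective : ∀ x ∈ TG.unitSpace, ∀ x' ∈ TG.unitSpace, ∀ z z' : Tsub,
    i x z = i x' z' → x = x' ∧ z = z'
  i_comp : ∀ x ∈ TG.unitSpace, ∀ z w : Tsub, TS.comp (i x z) (i x w)
  i_mul : ∀ x ∈ TG.unitSpace, ∀ z w : Tsub, TS.mul (i x z) (i x w) = i x (z * w)
  i_inv : ∀ x ∈ TG.unitSpace, ∀ z : Tsub, TS.inv (i x z) = i x z⁻¹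
  q_continuous : Continuous q
  q_surjective : Function.Surjective q
  q_quotient : ∀ V : Set G, IsOpen V ↔ IsOpen (q ⁻¹' V)
  q_comp : ∀ ε δ, TS.comp ε δ → TG.comp (q ε) (q δ)
  q_mul : ∀ ε δ, TS.comp ε δ → q (TS.mul ε δ) = TG.mul (q ε) (q δ)
  q_inv : ∀ ε, q (TS.inv ε) = TG.inv (q ε)
  q_i : ∀ x ∈ TG.unitSpace, ∀ z : Tsub, q (i x z) = x
  i_q_unit : ∀ ε ∈ TS.unitSpace, i (q ε) 1 = ε
  q_unit_mem : ∀ ε ∈ TS.unitSpace, q ε ∈ TG.unitSpace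
  exact_fibre : ∀ x ∈ TG.unitSpace, ∀ ε, q ε = x ↔ ∃ z : Tsub, ε = i x z
  central_comp_left : ∀ (ε : S) (z : Tsub), TS.comp (i (TG.r (q ε)) z) ε
  central_comp_right : ∀ (ε : S) (z : Tsub), TS.comp ε (i (TG.s (q ε)) z)
  central : ∀ (ε : S) (z : Tsub),
    TS.mul (i (TG.r (q ε)) z) ε = TS.mul ε (i (TG.s (q ε)) z)
  locally_trivial : ∀ α : G, ∃ B : Set G, α ∈ B ∧ IsOpen B ∧ TG.IsBisection B ∧
    ∃ P : G → S, ContinuousOn P B ∧ (∀ β ∈ B, q (P β) = β) ∧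
      Set.BijOn (fun p : G × Tsub => TS.mul (i (TG.r p.1) p.2) (P p.1))
        (B ×ˢ (Set.univ : Set Tsub)) (q ⁻¹' B) ∧
      ContinuousOn (fun p : G × Tsub => TS.mul (i (TG.r p.1) p.2) (P p.1))
        (B ×ˢ (Set.univ : Set Tsub)) ∧
      ∀ V ⊆ B ×ˢ (Set.univ : Set Tsub), IsOpen V →
        IsOpen ((fun p : G × Tsub => TS.mul (i (TG.r p.1) p.2) (P p.1)) '' V)

/-- The action `z ⬝ ε = i(r(ε), z) ε` of `Tsub` on the twist `Σ`. -/
def twistAct (TG : GroupoidStruct G) (TS : GroupoidStruct S)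
    {Tsub : Subgroup Rˣ} (i : G → Tsub → S) (q : S → G) (z : Tsub) (ε : S) : S :=
  TS.mul (i (TG.r (q ε)) z) ε

/-- A continuous global section `P : G → Σ` of the twist. -/
def IsGlobalSection (TG : GroupoidStruct G) (TS : GroupoidStruct S)
    (q : S → G) (P : G → S) : Prop :=
  Continuous P ∧ (∀ γ, q (P γ) = γ) ∧ ∀ x ∈ TG.unitSpace, P x ∈ TS.unitSpace

/-- The 2-cocycle `σ` is induced by the section `P`, i.e.
`P(α) P(β) P(αβ)⁻¹ = i(r(α), σ(α,β))` for composable `(α,β)`. -/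
def InducesCocycle (TG : GroupoidStruct G) (TS : GroupoidStruct S)
    {Tsub : Subgroup Rˣ} (i : G → Tsub → S) (P : G → S) (σ : G → G → Tsub) : Prop :=
  ∀ α β, TG.comp α β →
    TS.mul (TS.mul (P α) (P β)) (TS.inv (P (TG.mul α β))) = i (TG.r α) (σ α β)

/-- A continuous normalised 2-cocycle with values in the subgroup `Tsub ≤ Rˣ`. -/
structure IsCocycleSub (TG : GroupoidStruct G) (Tsub : Subgroup Rˣ)
    (σ : G → G → Tsub) : Prop where
  continuousOn : ContinuousOn (fun p : G × G => (((σ p.1 p.2 : Rˣ)) : R))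
    {p : G × G | TG.comp p.1 p.2}
  cocycle : ∀ a b c, TG.comp a b → TG.comp b c →
    σ a b * σ (TG.mul a b) c = σ a (TG.mul b c) * σ b c
  norm_left : ∀ γ : G, σ (TG.r γ) γ = 1
  norm_right : ∀ γ : G, σ γ (TG.s γ) = 1

/-- `σ` and `τ` are cohomologous via the continuous function `b : G → Tsub`. -/
def CohomologousVia (TG : GroupoidStruct G) {Tsub : Subgroup Rˣ}
    (σ τ : G → G → Tsub) (b : G → Tsub) : Prop :=
  Continuous (fun γ : G => ((b γ : Rˣ) : R)) ∧ (∀ x ∈ TG.unitSpace, b x = 1) ∧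
    ∀ α β, TG.comp α β → σ α β * (τ α β)⁻¹ = b α * b β * (b (TG.mul α β))⁻¹

/-- The twisted groupoid `G ×_σ T`. -/
def prodTwist (TG : GroupoidStruct G) (Tsub : Subgroup Rˣ) (σ : G → G → Tsub) :
    GroupoidStruct (G × Tsub) where
  comp p p' := TG.comp p.1 p'.1
  mul p p' := (TG.mul p.1 p'.1, σ p.1 p'.1 * p.2 * p'.2)
  inv p := (TG.inv p.1, (σ p.1 (TG.inv p.1))⁻¹ * p.2⁻¹)

/-- The inclusion `i_σ : G⁰ × T → G ×_σ T`. -/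
def prodTwistI (Tsub : Subgroup Rˣ) : G → Tsub → G × Tsub := fun x z => (x, z)

/-- The projection `q_σ : G ×_σ T → G`. -/
def prodTwistQ (Tsub : Subgroup Rˣ) : G × Tsub → G := fun p => p.1

/-- An isomorphism of discrete twists: a homeomorphism and groupoid
isomorphism intertwining the inclusions and projections. -/
def IsTwistIso {S1 S2 : Type*} [TopologicalSpace S1] [TopologicalSpace S2]
    (TG : GroupoidStruct G) (T1 : GroupoidStruct S1) (T2 : GroupoidStruct S2)
    {Tsub : Subgroup Rˣ} (i1 : G → Tsub → S1) (q1 : S1 → G)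
    (i2 : G → Tsub → S2) (q2 : S2 → G) (ψ : S1 → S2) : Prop :=
  Function.Bijective ψ ∧ Continuous ψ ∧ (∀ V : Set S1, IsOpen V → IsOpen (ψ '' V)) ∧
    (∀ δ ε, T1.comp δ ε → T2.comp (ψ δ) (ψ ε) ∧ ψ (T1.mul δ ε) = T2.mul (ψ δ) (ψ ε)) ∧
    (∀ x ∈ TG.unitSpace, ∀ z : Tsub, ψ (i1 x z) = i2 x z) ∧
    ∀ ε, q2 (ψ ε) = q1 ε

/-- The carrier of the twisted Steinberg algebra `A_R(G; Σ)`: continuous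
`Tsub`-equivariant functions `f : Σ → R` such that `q(supp f)` has compact
closure. -/
def twistCarrier (TG : GroupoidStruct G) (TS : GroupoidStruct S)
    {Tsub : Subgroup Rˣ} (i : G → Tsub → S) (q : S → G) : Set (S → R) :=
  {f | Continuous f ∧
    (∀ (z : Tsub) (ε : S), f (TS.mul (i (TG.r (q ε)) z) ε) = ((z : Rˣ) : R) * f ε) ∧
    IsCompact (closure (q '' Function.support f))}

/-- The convolution `(f *_Σ g)(ε) = ∑_{γ ∈ G^{s(q(ε))}} f(ε P(γ)) g(P(γ)⁻¹)`. -/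
noncomputable def twistConv (TG : GroupoidStruct G) (TS : GroupoidStruct S)
    (q : S → G) (P : G → S) (f g : S → R) (ε : S) : R :=
  ∑ᶠ (γ : G) (_ : TG.r γ = TG.s (q ε)), f (TS.mul ε (P γ)) * g (TS.inv (P γ))

/-- The involution `f*(ε) = c (f (ε⁻¹))` on `A_R(G; Σ)`. -/
def twistStar (TS : GroupoidStruct S) (c : R → R) (f : S → R) (ε : S) : R :=
  c (f (TS.inv ε))

end Twist
open Function Set

set_option linter.unusedSectionVars false
set_option linter.unusedVariables false

section Lemmas

variable {G : Type*} [TopologicalSpace G] {F : Type*} [Field F]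
  [TopologicalSpace F] [DiscreteTopology F]

namespace GroupoidStruct

variable {T : GroupoidStruct G}

theorem IsGroupoid.sr (h : T.IsGroupoid) (a : G) : T.s (T.r a) = T.r a := by
  have hc : T.comp a (T.inv a) := (h.comp_iff _ _).mpr (h.r_inv a).symm
  calc T.s (T.r a) = T.s (T.inv a) := h.s_mul a (T.inv a) hc
    _ = T.r a := h.s_inv a

theorem IsGroupoid.rs (h : T.IsGroupoid) (a : G) : T.r (T.s a) = T.s a := by
  have hc : T.comp (T.inv a) a := (h.comp_iff _ _).mpr (h.s_inv a)
  calc T.r (T.s a) = T.r (T.inv a) := h.r_mul (T.inv a) a hc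
    _ = T.s a := h.r_inv a

theorem IsGroupoid.rr (h : T.IsGroupoid) (a : G) : T.r (T.r a) = T.r a := by
  have hc : T.comp a (T.inv a) := (h.comp_iff _ _).mpr (h.r_inv a).symm
  exact h.r_mul a (T.inv a) hc

theorem IsGroupoid.unit_r (h : T.IsGroupoid) {x : G} (hx : x ∈ T.unitSpace) :
    T.r x = x := hx

theorem IsGroupoid.unit_s (h : T.IsGroupoid) {x : G} (hx : x ∈ T.unitSpace) :
    T.s x = x := by
  have hx' : T.r x = x := hx
  rw [← hx']
  exact h.sr x

theorem IsGroupoid.comp_r_left (h : T.IsGroupoid) (γ : G) : T.comp (T.r γ) γ :=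
  (h.comp_iff _ _).mpr (h.sr γ)

theorem IsGroupoid.comp_s_right (h : T.IsGroupoid) (γ : G) : T.comp γ (T.s γ) :=
  (h.comp_iff _ _).mpr (h.rs γ).symm

theorem IsGroupoid.cancel_left (h : T.IsGroupoid) {a b : G} (hab : T.comp a b) :
    T.mul (T.inv a) (T.mul a b) = b := by
  have hc : T.comp (T.inv a) a := (h.comp_iff _ _).mpr (h.s_inv a)
  have hsab : T.s a = T.r b := (h.comp_iff a b).mp hab
  calc T.mul (T.inv a) (T.mul a b) = T.mul (T.mul (T.inv a) a) b :=
        (h.assoc _ _ _ hc hab).symm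
    _ = T.mul (T.s a) b := rfl
    _ = T.mul (T.r b) b := by rw [hsab]
    _ = b := h.r_mul_self b

theorem IsTopGroupoid.continuous_r (h : T.IsTopGroupoid) : Continuous T.r :=
  h.continuousOn_mul.comp_continuous (continuous_id.prodMk h.continuous_inv)
    (fun γ => show T.comp γ (T.inv γ) from (h.comp_iff _ _).mpr (h.r_inv γ).symm)

theorem IsTopGroupoid.continuous_s (h : T.IsTopGroupoid) : Continuous T.s :=
  h.continuousOn_mul.comp_continuous (h.continuous_inv.prodMk continuous_id)
    (fun γ => show T.comp (T.inv γ) γ from (h.comp_iff _ _).mpr (h.s_inv γ))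

theorem IsTopGroupoid.isOpen_inv_image (h : T.IsTopGroupoid) {V : Set G}
    (hV : IsOpen V) : IsOpen (T.inv '' V) := by
  have : T.inv '' V = T.inv ⁻¹' V := by
    ext x
    constructor
    · rintro ⟨y, hy, rfl⟩
      simpa [h.inv_inv] using hy
    · intro hx
      exact ⟨T.inv x, hx, h.inv_inv x⟩
  rw [this]
  exact hV.preimage h.continuous_inv

theorem IsTopGroupoid.isClosed_unitSpace [T2Space G] (h : T.IsTopGroupoid) :
    IsClosed T.unitSpace :=
  isClosed_eq h.continuous_r continuous_id

theorem isOpen_unitSpace (h : T.IsTopGroupoid) (hample : T.IsAmple) :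
    IsOpen T.unitSpace := by
  rw [isOpen_iff_forall_mem_open]
  intro x hx
  obtain ⟨B, hB, hxB, -⟩ := hample.exists_subset_of_mem_open (Set.mem_univ x)
    isOpen_univ
  obtain ⟨-, -, U, hBU, hUopen, hrinj, -, -⟩ := hB
  refine ⟨U ∩ T.r ⁻¹' U, ?_, (hUopen.inter (hUopen.preimage h.continuous_r)), ?_, ?_⟩
  · rintro γ ⟨hγU, hrγU⟩
    exact hrinj hrγU hγU (h.rr γ)
  · exact hBU hxB
  · exact Set.mem_preimage.mpr (by rw [show T.r x = x from hx]; exact hBU hxB)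

end GroupoidStruct

section ConvInd

open GroupoidStruct

variable {G : Type*} [TopologicalSpace G] {F : Type*} [Field F]
  [TopologicalSpace F] [DiscreteTopology F] {T : GroupoidStruct G}

/-- Scaled indicator function. -/
noncomputable def ind (V : Set G) (c : F) : G → F := by
  classical exact fun γ => if γ ∈ V then c else 0

theorem ind_apply_of_mem {V : Set G} {c : F} {γ : G} (h : γ ∈ V) : ind V c γ = c := by
  simp [ind, h]

theorem ind_apply_of_not_mem {V : Set G} {c : F} {γ : G} (h : γ ∉ V) : ind V c γ = 0 := by
  simp [ind, h]

theorem support_ind_subset (V : Set G) (c : F) : support (ind V c) ⊆ V := by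
  intro γ hγ
  by_contra h
  exact hγ (ind_apply_of_not_mem h)

theorem ind_locallyConstant {V : Set G} (hV : IsClopen V) (c : F) :
    IsLocallyConstant (ind V c) := by
  intro s
  by_cases hc : c ∈ s <;> by_cases h0 : (0 : F) ∈ s
  · have : ind V c ⁻¹' s = Set.univ := by
      ext γ; by_cases hγ : γ ∈ V <;> simp [ind, hγ, hc, h0]
    rw [this]; exact isOpen_univ
  · have : ind V c ⁻¹' s = V := by
      ext γ; by_cases hγ : γ ∈ V <;> simp [ind, hγ, hc, h0]
    rw [this]; exact hV.isOpen
  · have : ind V c ⁻¹' s = Vᶜ := by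
      ext γ; by_cases hγ : γ ∈ V <;> simp [ind, hγ, hc, h0]
    rw [this]; exact hV.isClosed.isOpen_compl
  · have : ind V c ⁻¹' s = ∅ := by
      ext γ; by_cases hγ : γ ∈ V <;> simp [ind, hγ, hc, h0]
    rw [this]; exact isOpen_empty

theorem isClosed_support_of_locallyConstant {f : G → F} (hf : IsLocallyConstant f) :
    IsClosed (support f) := by
  have : support f = {x | f x = 0}ᶜ := by
    ext x; simp [Function.mem_support]
  rw [this]
  exact (hf.isOpen_fiber 0).isClosed_compl

theorem ind_mem_carrier [T2Space G] {V : Set G} (hVc : IsCompact V) (hVo : IsOpen V)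
    (c : F) : ind V c ∈ steinbergCarrier G F := by
  have hclopen : IsClopen V := ⟨hVc.isClosed, hVo⟩
  refine ⟨ind_locallyConstant hclopen c, ?_⟩
  exact hVc.of_isClosed_subset
    (isClosed_support_of_locallyConstant (ind_locallyConstant hclopen c))
    (support_ind_subset V c)

theorem indicator_one_eq_ind (V : Set G) : V.indicator (1 : G → F) = ind V 1 := by
  classical
  funext γ
  simp [ind, Set.indicator_apply]

theorem conv_apply_single {σ : G → G → Fˣ} (f g : G → F) (γ p₁ p₂ : G)
    (hc : T.comp p₁ p₂) (hm : T.mul p₁ p₂ = γ)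
    (huniq : ∀ a b, T.comp a b → T.mul a b = γ →
      ((σ a b : Fˣ) : F) * f a * g b ≠ 0 → a = p₁ ∧ b = p₂) :
    conv T σ f g γ = ((σ p₁ p₂ : Fˣ) : F) * f p₁ * g p₂ := by
  classical
  unfold conv
  rw [finsum_eq_single _ ((p₁, p₂) : G × G)]
  · rw [finsum_eq_if, if_pos ⟨hc, hm⟩]
  · rintro ⟨a, b⟩ hne
    rw [finsum_eq_if]
    split_ifs with h
    · by_contra hterm
      obtain ⟨rfl, rfl⟩ := huniq a b h.1 h.2 hterm
      exact hne rfl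
    · rfl

theorem conv_apply_eq_zero {σ : G → G → Fˣ} (f g : G → F) (γ : G)
    (h : ∀ a b, T.comp a b → T.mul a b = γ → ((σ a b : Fˣ) : F) * f a * g b = 0) :
    conv T σ f g γ = 0 := by
  classical
  unfold conv
  apply finsum_eq_zero_of_forall_eq_zero
  rintro ⟨a, b⟩
  rw [finsum_eq_if]
  split_ifs with hh
  · exact h a b hh.1 hh.2
  · rfl

theorem exists_of_conv_ne_zero {σ : G → G → Fˣ} {f g : G → F} {γ : G}
    (hne : conv T σ f g γ ≠ 0) :
    ∃ a b, T.comp a b ∧ T.mul a b = γ ∧ f a ≠ 0 ∧ g b ≠ 0 := by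
  by_contra hcon
  push_neg at hcon
  apply hne
  apply conv_apply_eq_zero
  intro a b hc hm
  by_cases hfa : f a = 0
  · simp [hfa]
  · simp [hcon a b hc hm hfa]

theorem conv_unitL (hG : T.IsGroupoid) {σ : G → G → Fˣ} (hσ : IsCocycle (R := F) T σ)
    {f' : G → F} (h : G → F) (hf' : support f' ⊆ T.unitSpace) (γ : G) :
    conv T σ f' h γ = f' (T.r γ) * h γ := by
  have key : conv T σ f' h γ = ((σ (T.r γ) γ : Fˣ) : F) * f' (T.r γ) * h γ := by
    apply conv_apply_single f' h γ (T.r γ) γ (hG.comp_r_left γ) (hG.r_mul_self γ)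
    intro a b hcab hmab hne
    have hfa : f' a ≠ 0 := fun h0 => hne (by simp [h0])
    have ha : a ∈ T.unitSpace := hf' hfa
    have ha' : a = T.r b := by rw [← hG.unit_s ha]; exact (hG.comp_iff a b).mp hcab
    have hb : T.mul a b = b := by rw [ha']; exact hG.r_mul_self b
    have hbγ : b = γ := by rw [← hmab, hb]
    exact ⟨by rw [ha', hbγ], hbγ⟩
  rw [key, hσ.norm_left, Units.val_one, one_mul]

theorem conv_unitR (hG : T.IsGroupoid) {σ : G → G → Fˣ} (hσ : IsCocycle (R := F) T σ)
    (f : G → F) {h' : G → F} (hh' : support h' ⊆ T.unitSpace) (γ : G) :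
    conv T σ f h' γ = f γ * h' (T.s γ) := by
  have key : conv T σ f h' γ = ((σ γ (T.s γ) : Fˣ) : F) * f γ * h' (T.s γ) := by
    apply conv_apply_single f h' γ γ (T.s γ) (hG.comp_s_right γ) (hG.mul_s_self γ)
    intro a b hcab hmab hne
    have hhb : h' b ≠ 0 := fun h0 => hne (by simp [h0])
    have hb : b ∈ T.unitSpace := hh' hhb
    have hb' : T.s a = b := by rw [(hG.comp_iff a b).mp hcab]; exact hG.unit_r hb
    have hab : T.mul a b = a := by rw [← hb']; exact hG.mul_s_self a
    have haγ : a = γ := by rw [← hmab, hab]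
    exact ⟨haγ, by rw [← hb', haγ]⟩
  rw [key, hσ.norm_right, Units.val_one, one_mul]

theorem conv_ind_ind (hG : T.IsGroupoid) {σ : G → G → Fˣ} (hσ : IsCocycle (R := F) T σ)
    {K : Set G} (hK : K ⊆ T.unitSpace) (a b : F) :
    conv T σ (ind K a) (ind K b) = ind K (a * b) := by
  funext γ
  rw [conv_unitL hG hσ _ ((support_ind_subset K a).trans hK)]
  by_cases hγ : γ ∈ K
  · have hu : T.r γ = γ := hG.unit_r (hK hγ)
    rw [hu, ind_apply_of_mem hγ, ind_apply_of_mem hγ, ind_apply_of_mem hγ]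
  · rw [ind_apply_of_not_mem hγ, ind_apply_of_not_mem hγ, mul_zero]

end ConvInd

section Carrier

open GroupoidStruct

variable {G : Type*} [TopologicalSpace G] {F : Type*} [Field F]
  [TopologicalSpace F] [DiscreteTopology F] {T : GroupoidStruct G}

theorem locallyConstant_iff_continuous {f : G → F} :
    IsLocallyConstant f ↔ Continuous f :=
  ⟨IsLocallyConstant.continuous, fun hf s => (isOpen_discrete s).preimage hf⟩

theorem carrier_zero : (0 : G → F) ∈ steinbergCarrier G F := by
  refine ⟨IsLocallyConstant.const 0, ?_⟩
  have : support (0 : G → F) = ∅ := Function.support_zero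
  rw [this]
  exact isCompact_empty

theorem carrier_neg {f : G → F} (hf : f ∈ steinbergCarrier G F) :
    -f ∈ steinbergCarrier G F := by
  refine ⟨hf.1.comp Neg.neg, ?_⟩
  have : support (-f) = support f := Function.support_neg f
  rw [this]
  exact hf.2

theorem carrier_add {f g : G → F} (hf : f ∈ steinbergCarrier G F)
    (hg : g ∈ steinbergCarrier G F) : f + g ∈ steinbergCarrier G F := by
  have hlc : IsLocallyConstant (f + g) := hf.1.comp₂ hg.1 (· + ·)
  refine ⟨hlc, (hf.2.union hg.2).of_isClosed_subset
    (isClosed_support_of_locallyConstant hlc) (Function.support_add f g)⟩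

theorem exists_local_inv (U : Set G) (hU : IsOpen U) (hinj : Set.InjOn T.s U)
    (hopen : ∀ V ⊆ U, IsOpen V → IsOpen (T.s '' V)) :
    ∃ τ : G → G, ContinuousOn τ (T.s '' U) ∧ (∀ u ∈ U, τ (T.s u) = u) ∧
      ∀ y ∈ T.s '' U, τ y ∈ U ∧ T.s (τ y) = y := by
  classical
  let τ : G → G := fun y => if h : y ∈ T.s '' U then h.choose else y
  have hτ : ∀ y, ∀ h : y ∈ T.s '' U, τ y ∈ U ∧ T.s (τ y) = y := by
    intro y h
    simp only [τ, dif_pos h]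
    obtain ⟨h1, h2⟩ := h.choose_spec
    exact ⟨h1, h2⟩
  have hτs : ∀ u ∈ U, τ (T.s u) = u := by
    intro u hu
    have h : T.s u ∈ T.s '' U := ⟨u, hu, rfl⟩
    exact hinj (hτ _ h).1 hu (hτ _ h).2
  refine ⟨τ, ?_, hτs, hτ⟩
  rw [continuousOn_iff]
  rintro y ⟨u₀, hu₀U, rfl⟩ t ht hτt
  rw [hτs u₀ hu₀U] at hτt
  refine ⟨T.s '' (U ∩ t), hopen _ Set.inter_subset_left (hU.inter ht),
    ⟨u₀, ⟨hu₀U, hτt⟩, rfl⟩, ?_⟩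
  rintro y ⟨⟨w, ⟨hwU, hwt⟩, rfl⟩, -⟩
  show τ (T.s w) ∈ t
  rw [hτs w hwU]
  exact hwt

theorem continuous_of_clopen_piece {W : Set G} (hW : IsOpen W) (hWc : IsOpen Wᶜ)
    {g : G → F} (h1 : ContinuousOn g W) (h2 : ∀ γ ∉ W, g γ = 0) : Continuous g := by
  rw [continuous_iff_continuousAt]
  intro x
  by_cases hx : x ∈ W
  · exact h1.continuousAt (hW.mem_nhds hx)
  · have heq : g =ᶠ[nhds x] (fun _ => (0 : F)) := by
      filter_upwards [hWc.mem_nhds hx] with y hy using h2 y hy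
    exact continuousAt_const.congr heq.symm

end Carrier

section GPackage

open GroupoidStruct

variable {G : Type*} [TopologicalSpace G] [T2Space G] {F : Type*} [Field F]
  [TopologicalSpace F] [DiscreteTopology F] {T : GroupoidStruct G}

theorem conv_binv_package (hT : T.IsTopGroupoid) {σ : G → G → Fˣ}
    (hσ : IsCocycle (R := F) T σ) {f : G → F} (hf : f ∈ steinbergCarrier G F)
    {B U : Set G} (hBcomp : IsCompact B) (hBopen : IsOpen B)
    (hBU : B ⊆ U) (hUopen : IsOpen U) (hsinj : Set.InjOn T.s U)
    (hopen : ∀ V ⊆ U, IsOpen V → IsOpen (T.s '' V)) {γ₀ : G} (hγ₀ : γ₀ ∈ B) :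
    conv T σ (ind (T.inv '' B) 1) f ∈ steinbergCarrier G F ∧
      conv T σ (ind (T.inv '' B) 1) f (T.s γ₀) =
        ((σ (T.inv γ₀) γ₀ : Fˣ) : F) * f γ₀ := by
  classical
  have hG := hT.toIsGroupoid
  set u : G → F := ind (T.inv '' B) 1 with hu
  obtain ⟨τ, hτcont, hτs, hτmem⟩ := exists_local_inv U hUopen hsinj hopen
  set W : Set G := T.r ⁻¹' (T.s '' B) with hWdef
  have hsB_open : IsOpen (T.s '' B) := hopen B hBU hBopen
  have hsB_closed : IsClosed (T.s '' B) := (hBcomp.image hT.continuous_s).isClosed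
  have hWopen : IsOpen W := hsB_open.preimage hT.continuous_r
  have hWcopen : IsOpen Wᶜ := by
    have : Wᶜ = T.r ⁻¹' (T.s '' B)ᶜ := rfl
    rw [this]
    exact hsB_closed.isOpen_compl.preimage hT.continuous_r
  -- facts about δ = τ (r γ) for γ ∈ W
  have hδfacts : ∀ γ ∈ W, τ (T.r γ) ∈ B ∧ T.s (τ (T.r γ)) = T.r γ := by
    intro γ hγW
    obtain ⟨b, hbB, hbs⟩ := hγW
    have hδb : τ (T.r γ) = b := by rw [← hbs, hτs b (hBU hbB)]
    exact ⟨hδb ▸ hbB, by rw [hδb, hbs]⟩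
  have hform : ∀ γ ∈ W, conv T σ u f γ =
      ((σ (T.inv (τ (T.r γ))) (T.mul (τ (T.r γ)) γ) : Fˣ) : F) *
        f (T.mul (τ (T.r γ)) γ) := by
    intro γ hγW
    obtain ⟨hδB, hsδ⟩ := hδfacts γ hγW
    set δ := τ (T.r γ)
    have hcδγ : T.comp δ γ := (hG.comp_iff _ _).mpr hsδ
    have hc1 : T.comp (T.inv δ) (T.mul δ γ) := (hG.comp_iff _ _).mpr
      (by rw [hG.s_inv, hG.r_mul δ γ hcδγ])
    have hm1 : T.mul (T.inv δ) (T.mul δ γ) = γ := hG.cancel_left hcδγ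
    have key := conv_apply_single (σ := σ) u f γ (T.inv δ) (T.mul δ γ) hc1 hm1 ?uniq
    case uniq =>
      intro a b hcab hmab hne
      have hua : u a ≠ 0 := fun h0 => hne (by simp [h0])
      have haB : a ∈ T.inv '' B := by
        by_contra h
        exact hua (ind_apply_of_not_mem h)
      obtain ⟨δ', hδ'B, rfl⟩ := haB
      have hsδ' : T.s δ' = T.r γ := by
        rw [← hG.r_inv δ', ← hmab]
        exact (hG.r_mul _ _ hcab).symm
      have hδ'δ : δ' = δ := hsinj (hBU hδ'B) (hBU hδB) (by rw [hsδ', hsδ])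
      subst hδ'δ
      refine ⟨rfl, ?_⟩
      have hcan := hG.cancel_left hcab
      rw [hmab, hG.inv_inv] at hcan
      exact hcan.symm
    rw [key, show u (T.inv δ) = 1 from ind_apply_of_mem ⟨δ, hδB, rfl⟩, mul_one]
  have hzero : ∀ γ ∉ W, conv T σ u f γ = 0 := by
    intro γ hγ
    apply conv_apply_eq_zero
    intro a b hcab hmab
    by_cases haB : a ∈ T.inv '' B
    · exfalso
      obtain ⟨δ', hδ', rfl⟩ := haB
      apply hγ
      show T.r γ ∈ T.s '' B
      have : T.r γ = T.s δ' := by rw [← hmab, hG.r_mul _ _ hcab, hG.r_inv]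
      rw [this]
      exact ⟨δ', hδ', rfl⟩
    · rw [show u a = 0 from ind_apply_of_not_mem haB, mul_zero, zero_mul]
  -- continuity
  haveI : ContinuousMul F := ⟨continuous_of_discreteTopology⟩
  have hδcont : ContinuousOn (fun γ => τ (T.r γ)) W :=
    hτcont.comp hT.continuous_r.continuousOn
      (fun γ hγ => by
        obtain ⟨b, hbB, hbs⟩ := hγ
        exact ⟨b, hBU hbB, hbs⟩)
  have hmapsδ : ∀ γ ∈ W, T.comp (τ (T.r γ)) γ := fun γ hγ =>
    (hG.comp_iff _ _).mpr (hδfacts γ hγ).2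
  have hmcont : ContinuousOn (fun γ => T.mul (τ (T.r γ)) γ) W :=
    ContinuousOn.comp (f := fun γ => (τ (T.r γ), γ)) hT.continuousOn_mul (hδcont.prodMk continuousOn_id) (fun γ hγ => hmapsδ γ hγ)
  have hmaps2 : ∀ γ ∈ W, T.comp (T.inv (τ (T.r γ))) (T.mul (τ (T.r γ)) γ) := by
    intro γ hγ
    exact (hG.comp_iff _ _).mpr (by rw [hG.s_inv, hG.r_mul _ _ (hmapsδ γ hγ)])
  have hpcont : ContinuousOn
      (fun γ => ((σ (T.inv (τ (T.r γ))) (T.mul (τ (T.r γ)) γ) : Fˣ) : F)) W :=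
    hσ.continuousOn.comp
      (((hT.continuous_inv.comp_continuousOn hδcont)).prodMk hmcont) (fun γ hγ => hmaps2 γ hγ)
  have hfcont : Continuous f := locallyConstant_iff_continuous.mp hf.1
  have hWcont : ContinuousOn (conv T σ u f) W :=
    ContinuousOn.congr (hpcont.mul (hfcont.comp_continuousOn hmcont)) hform
  have hcont : Continuous (conv T σ u f) :=
    continuous_of_clopen_piece hWopen hWcopen hWcont hzero
  -- compact support
  have hBinvcomp : IsCompact (T.inv '' B) := hBcomp.image hT.continuous_inv
  have hclosedcomp : IsClosed {p : G × G | T.comp p.1 p.2} := by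
    have : {p : G × G | T.comp p.1 p.2} = {p : G × G | T.s p.1 = T.r p.2} :=
      Set.ext fun p => hG.comp_iff p.1 p.2
    rw [this]
    exact isClosed_eq (hT.continuous_s.comp continuous_fst)
      (hT.continuous_r.comp continuous_snd)
  have hScomp : IsCompact (((T.inv '' B) ×ˢ support f) ∩ {p : G × G | T.comp p.1 p.2}) :=
    (hBinvcomp.prod hf.2).inter_right hclosedcomp
  have hC : IsCompact ((fun p : G × G => T.mul p.1 p.2) ''
      (((T.inv '' B) ×ˢ support f) ∩ {p : G × G | T.comp p.1 p.2})) :=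
    hScomp.image_of_continuousOn (hT.continuousOn_mul.mono (fun p hp => hp.2))
  have hsupp : support (conv T σ u f) ⊆ (fun p : G × G => T.mul p.1 p.2) ''
      (((T.inv '' B) ×ˢ support f) ∩ {p : G × G | T.comp p.1 p.2}) := by
    intro γ hγ
    obtain ⟨a, b, hc, hm, ha, hb⟩ := exists_of_conv_ne_zero hγ
    have haB : a ∈ T.inv '' B := by
      by_contra h
      exact ha (ind_apply_of_not_mem h)
    exact ⟨(a, b), ⟨⟨haB, hb⟩, hc⟩, hm⟩
  refine ⟨⟨locallyConstant_iff_continuous.mpr hcont,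
    hC.of_isClosed_subset (isClosed_support_of_locallyConstant
      (locallyConstant_iff_continuous.mpr hcont)) hsupp⟩, ?_⟩
  -- value at s γ₀
  have hsγ₀W : T.s γ₀ ∈ W := by
    show T.r (T.s γ₀) ∈ T.s '' B
    rw [hG.rs]
    exact ⟨γ₀, hγ₀, rfl⟩
  have hval := hform (T.s γ₀) hsγ₀W
  have hτγ₀ : τ (T.r (T.s γ₀)) = γ₀ := by
    rw [hG.rs]
    exact hτs γ₀ (hBU hγ₀)
  rw [hval, hτγ₀, hG.mul_s_self]

end GPackage

section Shrink

open GroupoidStruct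

variable {G : Type*} [TopologicalSpace G] [T2Space G] {T : GroupoidStruct G}

theorem shrink_step (hT : T.IsTopGroupoid) (hample : T.IsAmple)
    (heff : interior {γ : G | T.r γ = T.s γ} = T.unitSpace)
    {K D : Set G} (hKne : K.Nonempty) (hKcomp : IsCompact K) (hKopen : IsOpen K)
    (hDopen : IsOpen D) (hDbis : T.IsBisection D)
    (hDdisj : D ∩ T.unitSpace = ∅) :
    ∃ K', K' ⊆ K ∧ K'.Nonempty ∧ IsCompact K' ∧ IsOpen K' ∧
      ∀ γ ∈ D, ¬(T.r γ ∈ K' ∧ T.s γ ∈ K') := by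
  have hG := hT.toIsGroupoid
  set A := (D ∩ T.s ⁻¹' K) ∩ T.r ⁻¹' K with hAdef
  by_cases hA : A.Nonempty
  · have hAopen : IsOpen A := ((hDopen.inter (hKopen.preimage hT.continuous_s)).inter
      (hKopen.preimage hT.continuous_r))
    have hγ₁ : ∃ γ₁ ∈ A, T.r γ₁ ≠ T.s γ₁ := by
      by_contra hcon
      push_neg at hcon
      obtain ⟨γ, hγ⟩ := hA
      have hsub : A ⊆ interior {γ : G | T.r γ = T.s γ} :=
        interior_maximal (fun x hx => hcon x hx) hAopen
      rw [heff] at hsub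
      have hmem : γ ∈ D ∩ T.unitSpace := ⟨hγ.1.1, hsub hγ⟩
      rw [hDdisj] at hmem
      exact Set.notMem_empty γ hmem
    obtain ⟨γ₁, hγ₁A, hγ₁ne⟩ := hγ₁
    obtain ⟨Wr, Ws, hWr, hWs, hrWr, hsWs, hdisj⟩ := t2_separation hγ₁ne
    obtain ⟨U, hDU, hUopen, hrinj, hsinj, hUim⟩ := hDbis
    obtain ⟨τ, hτcont, hτs, hτmem⟩ := exists_local_inv U hUopen hsinj
      (fun V hVU hVo => (hUim V hVU hVo).2)
    have hρ : ContinuousOn (fun y => T.r (τ y)) (T.s '' U) :=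
      hT.continuous_r.comp_continuousOn hτcont
    have hγ₁D : γ₁ ∈ D := hγ₁A.1.1
    have hsγ₁U : T.s γ₁ ∈ T.s '' U := ⟨γ₁, hDU hγ₁D, rfl⟩
    have hρval : T.r (τ (T.s γ₁)) ∈ Wr := by
      rw [hτs γ₁ (hDU hγ₁D)]
      exact hrWr
    obtain ⟨O, hOopen, hsγ₁O, hOsub⟩ :=
      (continuousOn_iff.mp hρ) (T.s γ₁) hsγ₁U Wr hWr hρval
    have hsD_open : IsOpen (T.s '' D) := (hUim D hDU hDopen).2
    have hV₁open : IsOpen (K ∩ Ws ∩ T.s '' D ∩ O) :=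
      ((hKopen.inter hWs).inter hsD_open).inter hOopen
    have hsγ₁V₁ : T.s γ₁ ∈ K ∩ Ws ∩ T.s '' D ∩ O :=
      ⟨⟨⟨hγ₁A.1.2, hsWs⟩, ⟨γ₁, hγ₁D, rfl⟩⟩, hsγ₁O⟩
    obtain ⟨K', hK'basis, hK'mem, hK'sub⟩ :=
      hample.exists_subset_of_mem_open hsγ₁V₁ hV₁open
    obtain ⟨hK'comp, hK'open, -⟩ := hK'basis
    refine ⟨K', fun x hx => (hK'sub hx).1.1.1, ⟨_, hK'mem⟩, hK'comp, hK'open, ?_⟩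
    rintro γ hγD ⟨hrK', hsK'⟩
    have hsγU : T.s γ ∈ T.s '' U := ⟨γ, hDU hγD, rfl⟩
    have h1 : T.s γ ∈ O := (hK'sub hsK').2
    have h2 : T.r (τ (T.s γ)) ∈ Wr := hOsub ⟨h1, hsγU⟩
    rw [hτs γ (hDU hγD)] at h2
    have h3 : T.r γ ∈ Ws := (hK'sub hrK').1.1.2
    exact (Set.disjoint_left.mp hdisj h2) h3
  · refine ⟨K, subset_rfl, hKne, hKcomp, hKopen, ?_⟩
    rintro γ hγD ⟨hr, hs⟩
    exact hA ⟨γ, ⟨⟨hγD, hs⟩, hr⟩⟩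

theorem shrink_finset (hT : T.IsTopGroupoid) (hample : T.IsAmple)
    (heff : interior {γ : G | T.r γ = T.s γ} = T.unitSpace)
    {ι : Type*} (t : Finset ι) (Bs : ι → Set G)
    (hBs : ∀ i ∈ t, IsOpen (Bs i) ∧ T.IsBisection (Bs i) ∧ Bs i ∩ T.unitSpace = ∅)
    {K : Set G} (hKne : K.Nonempty) (hKcomp : IsCompact K) (hKopen : IsOpen K) :
    ∃ K', K' ⊆ K ∧ K'.Nonempty ∧ IsCompact K' ∧ IsOpen K' ∧
      ∀ i ∈ t, ∀ γ ∈ Bs i, ¬(T.r γ ∈ K' ∧ T.s γ ∈ K') := by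
  classical
  induction t using Finset.induction_on with
  | empty => exact ⟨K, subset_rfl, hKne, hKcomp, hKopen, by simp⟩
  | @insert a t ha ih =>
    obtain ⟨K₁, hK₁K, hK₁ne, hK₁comp, hK₁open, hK₁prop⟩ :=
      ih (fun i hi => hBs i (Finset.mem_insert_of_mem hi))
    obtain ⟨ho, hbis, hdisj⟩ := hBs a (Finset.mem_insert_self a t)
    obtain ⟨K', hK'K₁, hK'ne, hK'comp, hK'open, hK'prop⟩ :=
      shrink_step hT hample heff hK₁ne hK₁comp hK₁open ho hbis hdisj
    refine ⟨K', hK'K₁.trans hK₁K, hK'ne, hK'comp, hK'open, ?_⟩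
    intro i hi γ hγ hcon
    rcases Finset.mem_insert.mp hi with rfl | hit
    · exact hK'prop γ hγ hcon
    · exact hK₁prop i hit γ hγ ⟨hK'K₁ hcon.1, hK'K₁ hcon.2⟩

end Shrink

section Main

open GroupoidStruct

variable {G : Type*} [TopologicalSpace G] [T2Space G] {F : Type*} [Field F]
  [TopologicalSpace F] [DiscreteTopology F] {T : GroupoidStruct G}

theorem main_nonzero {Q : Type*} [Ring Q]
    (hT : T.IsTopGroupoid) (hample : T.IsAmple)
    (heff : interior {γ : G | T.r γ = T.s γ} = T.unitSpace)
    {σ : G → G → Fˣ} (hσ : IsCocycle (R := F) T σ)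
    (π : (G → F) → Q)
    (hπmul : ∀ f g, f ∈ steinbergCarrier G F → g ∈ steinbergCarrier G F →
      π (conv T σ f g) = π f * π g)
    (hπV : ∀ V : Set G, V.Nonempty → V ⊆ T.unitSpace → IsCompact V → IsOpen V →
      π (V.indicator 1) ≠ 0)
    {f : G → F} (hf : f ∈ steinbergCarrier G F) (hfne : f ≠ 0) : π f ≠ 0 := by
  classical
  have hG := hT.toIsGroupoid
  haveI : ContinuousMul F := ⟨continuous_of_discreteTopology⟩
  obtain ⟨γ₀, hγ₀⟩ : ∃ γ, f γ ≠ 0 := by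
    by_contra h
    push_neg at h
    exact hfne (funext h)
  obtain ⟨B, hBmem, hγ₀B, hBsub⟩ := hample.exists_subset_of_mem_open
    (show γ₀ ∈ {x | f x = f γ₀} from rfl) (hf.1.isOpen_fiber (f γ₀))
  obtain ⟨hBcomp, hBopen, hBbis⟩ := hBmem
  obtain ⟨U, hBU, hUopen, hrinj, hsinj, hUim⟩ := hBbis
  have hpack := conv_binv_package hT hσ hf hBcomp hBopen hBU hUopen hsinj
    (fun V h1 h2 => (hUim V h1 h2).2) hγ₀B
  set g := conv T σ (ind (T.inv '' B) 1) f with hg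
  have hgmem := hpack.1
  set x := T.s γ₀ with hx
  have hxunit : x ∈ T.unitSpace := hG.s_unit γ₀
  have hgx : g x ≠ 0 := by
    rw [hpack.2]
    exact mul_ne_zero (Units.ne_zero _) hγ₀
  have hgcont : Continuous g := locallyConstant_iff_continuous.mp hgmem.1
  have hVopen : IsOpen {y | g y = g x} := hgmem.1.isOpen_fiber (g x)
  have hunitopen : IsOpen T.unitSpace := isOpen_unitSpace hT hample
  obtain ⟨K₀, hK₀mem, hxK₀, hK₀sub⟩ := hample.exists_subset_of_mem_open
    (show x ∈ {y | g y = g x} ∩ T.unitSpace from ⟨rfl, hxunit⟩)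
    (hVopen.inter hunitopen)
  obtain ⟨hK₀comp, hK₀open, -⟩ := hK₀mem
  have hM : IsCompact (support g ∩ T.unitSpaceᶜ) :=
    hgmem.2.inter_right hunitopen.isClosed_compl
  -- cover by compact open bisections disjoint from the unit space
  set ι := {p : Set G // (IsCompact p ∧ IsOpen p ∧ T.IsBisection p) ∧
    p ∩ T.unitSpace = ∅} with hι
  have hcover : support g ∩ T.unitSpaceᶜ ⊆ ⋃ i : ι, i.1 := by
    intro γ hγ
    obtain ⟨B', hB'mem, hγB', hB'sub⟩ := hample.exists_subset_of_mem_open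
      (show γ ∈ T.unitSpaceᶜ from hγ.2) hT.isClosed_unitSpace.isOpen_compl
    refine Set.mem_iUnion.mpr ⟨⟨B', hB'mem, ?_⟩, hγB'⟩
    rw [Set.eq_empty_iff_forall_notMem]
    rintro y ⟨hy1, hy2⟩
    exact hB'sub hy1 hy2
  obtain ⟨t, ht⟩ := hM.elim_finite_subcover (fun i : ι => i.1)
    (fun i => i.2.1.2.1) hcover
  obtain ⟨K, hKK₀, hKne, hKcomp, hKopen, hKprop⟩ := shrink_finset hT hample heff t
    (fun i : ι => i.1) (fun i _ => ⟨i.2.1.2.1, i.2.1.2.2, i.2.2⟩)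
    ⟨x, hxK₀⟩ hK₀comp hK₀open
  have hKunit : K ⊆ T.unitSpace := fun y hy => (hK₀sub (hKK₀ hy)).2
  have hKg : ∀ y ∈ K, g y = g x := fun y hy => (hK₀sub (hKK₀ hy)).1
  set c := g x with hc
  set h₁ := conv T σ (ind K 1) g with hh₁
  set h₂ := conv T σ h₁ (ind K 1) with hh₂
  have hindK : ind K (1 : F) ∈ steinbergCarrier G F := ind_mem_carrier hKcomp hKopen 1
  have hsuppind : support (ind K (1 : F)) ⊆ T.unitSpace :=
    (support_ind_subset K 1).trans hKunit
  have h₁eq : ∀ γ, h₁ γ = ind K 1 (T.r γ) * g γ := conv_unitL hG hσ g hsuppind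
  have hindKcont : Continuous (ind K (1 : F)) :=
    (ind_locallyConstant ⟨hKcomp.isClosed, hKopen⟩ 1).continuous
  have h₁mem : h₁ ∈ steinbergCarrier G F := by
    have hlc : IsLocallyConstant h₁ := by
      rw [show h₁ = fun γ => ind K 1 (T.r γ) * g γ from funext h₁eq]
      exact locallyConstant_iff_continuous.mpr
        ((hindKcont.comp hT.continuous_r).mul hgcont)
    refine ⟨hlc, hgmem.2.of_isClosed_subset
      (isClosed_support_of_locallyConstant hlc) ?_⟩
    intro γ hγ
    rw [Function.mem_support, h₁eq] at hγ
    exact fun h0 => hγ (by rw [h0, mul_zero])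
  have h₂eq : ∀ γ, h₂ γ = h₁ γ * ind K 1 (T.s γ) := conv_unitR hG hσ h₁ hsuppind
  have h₂val : h₂ = ind K c := by
    funext γ
    rw [h₂eq, h₁eq]
    by_cases hγK : γ ∈ K
    · have hrγ : T.r γ = γ := hG.unit_r (hKunit hγK)
      have hsγ : T.s γ = γ := hG.unit_s (hKunit hγK)
      rw [hrγ, hsγ, ind_apply_of_mem hγK, ind_apply_of_mem hγK, hKg γ hγK]
      ring
    · rw [ind_apply_of_not_mem hγK]
      by_cases hr : T.r γ ∈ K
      · by_cases hs : T.s γ ∈ K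
        · have hγunit : γ ∉ T.unitSpace := fun hu => hγK (by
            rw [← hG.unit_r hu]; exact hr)
          have hgγ : g γ = 0 := by
            by_contra hgγ
            obtain ⟨Ui, hit, hγi⟩ := Set.mem_iUnion₂.mp (ht ⟨hgγ, hγunit⟩)
            exact hKprop Ui hit γ hγi ⟨hr, hs⟩
          rw [hgγ]
          ring
        · rw [ind_apply_of_not_mem hs, mul_zero]
      · rw [ind_apply_of_not_mem hr, zero_mul, zero_mul]
  have h₂mem : h₂ ∈ steinbergCarrier G F := by
    rw [h₂val]
    exact ind_mem_carrier hKcomp hKopen c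
  -- the π computation
  intro hπf
  have humem : ind (T.inv '' B) (1 : F) ∈ steinbergCarrier G F :=
    ind_mem_carrier (hBcomp.image hT.continuous_inv) (hT.isOpen_inv_image hBopen) 1
  have hπg : π g = 0 := by
    rw [hg, hπmul _ _ humem hf, hπf, mul_zero]
  have hπh₁ : π h₁ = 0 := by
    rw [hh₁, hπmul _ _ hindK hgmem, hπg, mul_zero]
  have hπh₂ : π h₂ = 0 := by
    rw [hh₂, hπmul _ _ h₁mem hindK, hπh₁, zero_mul]
  have hindc : ind K c ∈ steinbergCarrier G F := ind_mem_carrier hKcomp hKopen c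
  have hindcinv : ind K c⁻¹ ∈ steinbergCarrier G F := ind_mem_carrier hKcomp hKopen c⁻¹
  have hπK : π (ind K 1) = 0 := by
    have hkey : π (ind K (1 : F)) = π (ind K c) * π (ind K c⁻¹) := by
      rw [← hπmul _ _ hindc hindcinv, conv_ind_ind hG hσ hKunit,
        mul_inv_cancel₀ hgx]
    rw [hkey, ← h₂val, hπh₂, zero_mul]
  apply hπV K hKne hKunit hKcomp hKopen
  rw [indicator_one_eq_ind]
  exact hπK

end Main

end Lemmas
/-- **Cuntz–Krieger uniqueness theorem.** Let `F` be a
discrete field, `G` an effective ample Hausdorff groupoid, and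
`σ : G⁽²⁾ → Fˣ` a continuous 2-cocycle.  A ring homomorphism
`π : A_F(G, σ) → Q` is injective if and only if `π(1_V) ≠ 0` for every
nonempty compact open subset `V ⊆ G⁰`. -/
theorem cuntzKrieger_uniqueness
    {G F Q : Type*} [TopologicalSpace G] [T2Space G] [LocallyCompactSpace G]
    [Field F] [TopologicalSpace F] [DiscreteTopology F] [Ring Q]
    (T : GroupoidStruct G) (hT : T.IsTopGroupoid) (hample : T.IsAmple)
    (heffective : interior {γ : G | T.r γ = T.s γ} = T.unitSpace)
    (σ : G → G → Fˣ) (hσ : IsCocycle (R := F) T σ)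
    (π : (G → F) → Q)
    (hπadd : ∀ f g, f ∈ steinbergCarrier G F → g ∈ steinbergCarrier G F →
      π (f + g) = π f + π g)
    (hπmul : ∀ f g, f ∈ steinbergCarrier G F → g ∈ steinbergCarrier G F →
      π (conv T σ f g) = π f * π g) :
    Set.InjOn π (steinbergCarrier G F) ↔
      ∀ V : Set G, V.Nonempty → V ⊆ T.unitSpace → IsCompact V → IsOpen V →
        π (V.indicator 1) ≠ 0 := by
  classical
  have hG := hT.toIsGroupoid
  have hπ0 : π 0 = 0 := by
    have h := hπadd 0 0 carrier_zero carrier_zero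
    rw [add_zero] at h
    exact (left_eq_add.mp h)
  constructor
  · intro hinj V hVne hVunit hVcomp hVopen h0
    have h1 : V.indicator (1 : G → F) ∈ steinbergCarrier G F := by
      rw [indicator_one_eq_ind]
      exact ind_mem_carrier hVcomp hVopen 1
    have heq := hinj h1 carrier_zero (by rw [h0, hπ0])
    obtain ⟨v, hv⟩ := hVne
    have hval := congrFun heq v
    rw [indicator_one_eq_ind, ind_apply_of_mem hv] at hval
    exact one_ne_zero hval
  · intro hπV a ha b hb hab
    by_contra hne
    have hnb : -b ∈ steinbergCarrier G F := carrier_neg hb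
    have hd : a + -b ∈ steinbergCarrier G F := carrier_add ha hnb
    have hdne : a + -b ≠ 0 := fun h =>
      hne (by rwa [← sub_eq_add_neg, sub_eq_zero] at h)
    have hπneg : π (-b) = -π b := by
      have h1 := hπadd b (-b) hb hnb
      rw [add_neg_cancel, hπ0] at h1
      exact (eq_neg_of_add_eq_zero_right h1.symm)
    have hπd : π (a + -b) = 0 := by
      rw [hπadd a (-b) ha hnb, hπneg, hab, add_neg_cancel]
    exact main_nonzero hT hample heffective hσ π hπmul hπV hd hdne hπd
end TwistedSteinberg
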